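/- arXiv:2411.04893 — 3 statements merged into one kernel-verified Lean document; each statement's English description precedes it below -/
import Mathlib

section
/- If λ and μ are distinct partitions of n with λ dominating μ (i.e., for all j, λ₁+⋯+λⱼ ≥ μ₁+⋯+μⱼ), then the total content of λ strictly exceeds that of μ, where the total content of a partition ν is the sum over all boxes (x,y) of its Young diagram of (y − x) (column index minus row index). -/
open Finset

/-- Telescoping / Abel summation identity. -/
lemma tele5 (D c : ℕ → ℤ) (N : ℕ) :
    ∑ i ∈ range N, (D (i+1) - D i) * c i
      = D N * c N - D 0 * c 0 - ∑ i ∈ range N, D (i+1) * (c (i+1) - c i) := by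
  induction N with
  | zero => simp
  | succ N ih => rw [sum_range_succ, sum_range_succ, ih]; ring

/-- Twice the content of a row. -/
lemma row5 (i a : ℕ) :
    2 * ∑ j ∈ range a, ((j : ℤ) - (i : ℤ)) = (a : ℤ) * ((a : ℤ) - 1 - 2 * i) := by
  induction a with
  | zero => simp
  | succ a ih => rw [sum_range_succ]; push_cast; push_cast at ih; linarith [ih]

/-- If `l` and `m` are distinct partitions of `n` (written as antitone sequences of parts,
vanishing from index `n` on) with `l` dominating `m`, then the total content of `l`
strictly exceeds that of `m`, where the total content is the sum over boxes `(i,j)`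
(0-based row `i`, column `j`) of `j − i`. -/
theorem stmt5 (n : ℕ) (l m : ℕ → ℕ)
    (hl : Antitone l) (hm : Antitone m)
    (hl0 : l n = 0) (hm0 : m n = 0)
    (hln : ∑ i ∈ Finset.range n, l i = n) (hmn : ∑ i ∈ Finset.range n, m i = n)
    (hdom : ∀ j : ℕ, ∑ i ∈ Finset.range j, m i ≤ ∑ i ∈ Finset.range j, l i)
    (hne : l ≠ m) :
    ∑ i ∈ Finset.range n, ∑ j ∈ Finset.range (m i), ((j : ℤ) - (i : ℤ)) <
      ∑ i ∈ Finset.range n, ∑ j ∈ Finset.range (l i), ((j : ℤ) - (i : ℤ)) := by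
  set D : ℕ → ℤ := fun k => (∑ i ∈ range k, (l i : ℤ)) - ∑ i ∈ range k, (m i : ℤ) with hD
  set c : ℕ → ℤ := fun i => (l i : ℤ) + (m i : ℤ) - 1 - 2 * i with hc
  have hD0 : D 0 = 0 := by simp [hD]
  have hDn : D n = 0 := by
    have h1 : (∑ i ∈ range n, (l i : ℤ)) = (n : ℤ) := by rw [← Nat.cast_sum, hln]
    have h2 : (∑ i ∈ range n, (m i : ℤ)) = (n : ℤ) := by rw [← Nat.cast_sum, hmn]
    simp [hD, h1, h2]
  have hDpos : ∀ k, 0 ≤ D k := by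
    intro k
    have h := hdom k
    have h' : (∑ i ∈ range k, (m i : ℤ)) ≤ ∑ i ∈ range k, (l i : ℤ) := by
      rw [← Nat.cast_sum, ← Nat.cast_sum]; exact_mod_cast h
    simp only [hD]; linarith
  have hstep : ∀ i, D (i+1) - D i = (l i : ℤ) - (m i : ℤ) := by
    intro i
    simp only [hD, Finset.sum_range_succ]; ring
  have hcdec : ∀ i, 2 ≤ c i - c (i+1) := by
    intro i
    have h1' : (l (i+1) : ℤ) ≤ (l i : ℤ) := by exact_mod_cast hl (Nat.le_succ i)
    have h2' : (m (i+1) : ℤ) ≤ (m i : ℤ) := by exact_mod_cast hm (Nat.le_succ i)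
    simp only [hc]
    push_cast
    linarith
  -- existence of a strictly positive `D (i+1)` with `i < n`
  obtain ⟨i0, hi0⟩ : ∃ i, l i ≠ m i := Function.ne_iff.mp hne
  have hi0n : i0 < n := by
    by_contra h
    push_neg at h
    have e1 : l i0 = 0 := Nat.le_antisymm (hl0 ▸ hl h) (Nat.zero_le _)
    have e2 : m i0 = 0 := Nat.le_antisymm (hm0 ▸ hm h) (Nat.zero_le _)
    exact hi0 (e1.trans e2.symm)
  have hne' : (l i0 : ℤ) ≠ (m i0 : ℤ) := by exact_mod_cast hi0
  have hex : ∃ i ∈ range n, 0 < D (i+1) := by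
    rcases hne'.lt_or_gt with h | h
    · -- l i0 < m i0 : then D i0 > 0 and i0 ≥ 1
      have hDi0 : 0 < D i0 := by
        have hs := hstep i0; have hp := hDpos (i0+1); linarith
      have hi00 : i0 ≠ 0 := by
        intro e; rw [e, hD0] at hDi0; exact lt_irrefl _ hDi0
      refine ⟨i0 - 1, mem_range.mpr (by omega), ?_⟩
      have e : i0 - 1 + 1 = i0 := by omega
      rw [e]; exact hDi0
    · refine ⟨i0, mem_range.mpr hi0n, ?_⟩
      have hs := hstep i0; have hp := hDpos i0; linarith
  have key : 0 < ∑ i ∈ range n, D (i+1) * (c i - c (i+1)) := by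
    apply Finset.sum_pos'
    · intro i _
      exact mul_nonneg (hDpos _) (by linarith [hcdec i])
    · obtain ⟨i, hi, hpos⟩ := hex
      exact ⟨i, hi, mul_pos hpos (by linarith [hcdec i])⟩
  have A := tele5 D c n
  rw [hD0, hDn] at A
  have B : ∑ i ∈ range n, D (i+1) * (c i - c (i+1))
      = - ∑ i ∈ range n, D (i+1) * (c (i+1) - c i) := by
    rw [← Finset.sum_neg_distrib]
    exact Finset.sum_congr rfl fun i _ => by ring
  have row : ∀ i, (D (i+1) - D i) * c i
      = 2 * (∑ j ∈ range (l i), ((j : ℤ) - (i : ℤ)))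
        - 2 * (∑ j ∈ range (m i), ((j : ℤ) - (i : ℤ))) := by
    intro i
    rw [hstep i, row5 i (l i), row5 i (m i)]
    simp only [hc]; ring
  have final : ∑ i ∈ range n, (D (i+1) - D i) * c i
      = 2 * (∑ i ∈ range n, ∑ j ∈ range (l i), ((j : ℤ) - (i : ℤ)))
        - 2 * (∑ i ∈ range n, ∑ j ∈ range (m i), ((j : ℤ) - (i : ℤ))) := by
    rw [Finset.mul_sum, Finset.mul_sum, ← Finset.sum_sub_distrib]
    exact Finset.sum_congr rfl fun i _ => row i
  linarith
end

section
/- Let P be the transition matrix of a finite irreducible Markov chain. For a nonempty proper subset S of the state space and states x, y ∈ S, define the induced transition probability P̃(x,y) = P(x,y) + Σ_{n≥1} Σ_{x₁,…,xₙ ∉ S} P(x,x₁)P(x₁,x₂)⋯P(xₙ,y). Then the series converges and P̃ is row-stochastic: Σ_{y ∈ S} P̃(x,y) = 1 for every x ∈ S. -/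
open Finset

namespace Stmt10Aux

variable {X : Type*} [Fintype X] [DecidableEq X] (P : X → X → ℝ) (S : Finset X)

/-- weight of staying in the complement of `S` for `k+1` steps -/
def V (k : ℕ) (x : X) : ℝ :=
  ∑ q : Fin (k+1) → {z : X // z ∉ S}, P x (q 0) * ∏ i : Fin k, P (q i.castSucc) (q i.succ)

/-- excursion weight -/
def A (k : ℕ) (x y : X) : ℝ :=
  ∑ q : Fin (k+1) → {z : X // z ∉ S},
    P x (q 0) * (∏ i : Fin k, P (q i.castSucc) (q i.succ)) * P (q (Fin.last k)) y

variable {P} in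
lemma P_le_one (hnn : ∀ x y, 0 ≤ P x y) (hrow : ∀ x, ∑ y, P x y = 1) (x y : X) :
    P x y ≤ 1 := by
  rw [← hrow x]
  exact Finset.single_le_sum (fun i _ => hnn x i) (mem_univ y)

variable {P} in
lemma V_nonneg (hnn : ∀ x y, 0 ≤ P x y) (k : ℕ) (x : X) : 0 ≤ V P S k x :=
  Finset.sum_nonneg fun q _ => mul_nonneg (hnn _ _) (Finset.prod_nonneg fun i _ => hnn _ _)

variable {P} in
lemma A_nonneg (hnn : ∀ x y, 0 ≤ P x y) (k : ℕ) (x y : X) : 0 ≤ A P S k x y :=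
  Finset.sum_nonneg fun q _ => mul_nonneg
    (mul_nonneg (hnn _ _) (Finset.prod_nonneg fun i _ => hnn _ _)) (hnn _ _)

lemma V_zero (x : X) : V P S 0 x = ∑ z : {z : X // z ∉ S}, P x ↑z := by
  rw [V, ← Equiv.sum_comp (Equiv.funUnique (Fin 1) {z : X // z ∉ S}).symm]
  simp

lemma V_succ (k : ℕ) (x : X) :
    V P S (k+1) x = ∑ z : {z : X // z ∉ S}, P x ↑z * V P S k ↑z := by
  rw [show V P S (k+1) x = ∑ q : Fin (k+2) → {z : X // z ∉ S}, P x ↑(q 0) *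
      ∏ i : Fin (k+1), P ↑(q i.castSucc) ↑(q i.succ) from rfl]
  rw [← Equiv.sum_comp (Fin.consEquiv fun _ : Fin (k+2) => ({z : X // z ∉ S} : Type _))]
  rw [Fintype.sum_prod_type]
  refine Finset.sum_congr rfl fun z _ => ?_
  rw [V, mul_sum]
  refine Finset.sum_congr rfl fun q _ => ?_
  simp only [Fin.consEquiv_apply, Fin.prod_univ_succ, Fin.castSucc_zero, Fin.cons_zero,
    ← Fin.succ_castSucc, Fin.cons_succ]

lemma V_succ' (k : ℕ) (x : X) :
    V P S (k+1) x = ∑ z : {z : X // z ∉ S}, A P S k x ↑z := by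
  rw [show V P S (k+1) x = ∑ q : Fin (k+2) → {z : X // z ∉ S}, P x ↑(q 0) *
      ∏ i : Fin (k+1), P ↑(q i.castSucc) ↑(q i.succ) from rfl]
  rw [← Equiv.sum_comp (Fin.snocEquiv fun _ : Fin (k+2) => ({z : X // z ∉ S} : Type _))]
  rw [Fintype.sum_prod_type]
  refine Finset.sum_congr rfl fun z _ => ?_
  rw [A]
  refine Finset.sum_congr rfl fun q _ => ?_
  have h0 : (0 : Fin (k+2)) = Fin.castSucc 0 := by simp
  simp only [Fin.snocEquiv_apply, h0, Fin.prod_univ_castSucc, Fin.succ_castSucc,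
    Fin.snoc_castSucc, Fin.succ_last, Fin.snoc_last]
  ring

variable {P} in
lemma hsplit (f : X → ℝ) :
    ∑ y ∈ S, f y + ∑ z : {z : X // z ∉ S}, f ↑z = ∑ y, f y := by
  rw [← Finset.sum_subtype Sᶜ (fun z => Finset.mem_compl) f]
  exact Finset.sum_add_sum_compl S f

variable {P} in
lemma sum_univ_A (hrow : ∀ x, ∑ y, P x y = 1) (k : ℕ) (x : X) :
    ∑ y, A P S k x y = V P S k x := by
  simp only [A, V]
  rw [Finset.sum_comm]
  refine Finset.sum_congr rfl fun q _ => ?_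
  rw [← Finset.mul_sum, hrow, mul_one]

variable {P} in
lemma sum_A (hrow : ∀ x, ∑ y, P x y = 1) (k : ℕ) (x : X) :
    ∑ y ∈ S, A P S k x y = V P S k x - V P S (k+1) x := by
  have := hsplit S (A P S k x)
  rw [sum_univ_A S hrow k x] at this
  rw [V_succ']
  linarith

variable {P} in
lemma pow_nonneg' (hnn : ∀ x y, 0 ≤ P x y) (k : ℕ) (x y : X) :
    0 ≤ ((Matrix.of P) ^ k) x y := by
  induction k generalizing x y with
  | zero => simp [Matrix.one_apply]; positivity
  | succ k ih =>
    rw [pow_succ, Matrix.mul_apply]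
    exact Finset.sum_nonneg fun u _ => mul_nonneg (ih x u) (hnn u y)

variable {P} in
lemma pow_rowsum (hrow : ∀ x, ∑ y, P x y = 1) (k : ℕ) (x : X) :
    ∑ y, ((Matrix.of P) ^ k) x y = 1 := by
  induction k generalizing x with
  | zero => simp [Matrix.one_apply]
  | succ k ih =>
    simp only [pow_succ, Matrix.mul_apply]
    rw [Finset.sum_comm]
    have : ∀ u : X, ∑ y, ((Matrix.of P) ^ k) x u * P u y = ((Matrix.of P) ^ k) x u := by
      intro u; rw [← Finset.mul_sum, hrow, mul_one]
    simp only [Matrix.of_apply] at this ⊢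
    rw [Finset.sum_congr rfl fun u _ => this u, ih]

/-- probability of being in `S` at time `k` -/
def W (k : ℕ) (z : X) : ℝ := ∑ s ∈ S, ((Matrix.of P) ^ k) z s

variable {P} in
lemma W_nonneg (hnn : ∀ x y, 0 ≤ P x y) (k : ℕ) (z : X) : 0 ≤ W P S k z :=
  Finset.sum_nonneg fun s _ => pow_nonneg' hnn k z s

variable {P} in
lemma W_le_one (hnn : ∀ x y, 0 ≤ P x y) (hrow : ∀ x, ∑ y, P x y = 1) (k : ℕ) (z : X) :
    W P S k z ≤ 1 := by
  rw [← pow_rowsum hrow k z]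
  exact Finset.sum_le_sum_of_subset_of_nonneg (Finset.subset_univ S)
    (fun s _ _ => pow_nonneg' hnn k z s)

variable {P} in
lemma W_succ (k : ℕ) (z : X) :
    W P S (k+1) z = ∑ u, P z u * W P S k u := by
  simp only [W, pow_succ', Matrix.mul_apply, Matrix.of_apply]
  rw [Finset.sum_comm]
  exact Finset.sum_congr rfl fun u _ => (Finset.mul_sum _ _ _).symm

variable {P} in
lemma V_le_one_sub_W (hnn : ∀ x y, 0 ≤ P x y) (hrow : ∀ x, ∑ y, P x y = 1) (k : ℕ) :
    ∀ z : X, V P S k z ≤ 1 - W P S (k+1) z := by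
  induction k with
  | zero =>
    intro z
    rw [V_zero]
    have hW : W P S (0+1) z = ∑ s ∈ S, P z s := by simp [W, Matrix.of_apply]
    rw [hW]
    have := hsplit S (P z)
    rw [hrow z] at this
    linarith
  | succ k ih =>
    intro z
    rw [V_succ, W_succ]
    have hWsplit := hsplit S (fun u => P z u * W P S (k+1) u)
    have hPsplit := hsplit S (P z)
    rw [hrow z] at hPsplit
    have h1 : ∑ w : {w : X // w ∉ S}, P z ↑w * V P S k ↑w
        ≤ ∑ w : {w : X // w ∉ S}, P z ↑w * (1 - W P S (k+1) ↑w) :=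
      Finset.sum_le_sum fun w _ => mul_le_mul_of_nonneg_left (ih ↑w) (hnn _ _)
    have h2 : ∑ w : {w : X // w ∉ S}, P z ↑w * (1 - W P S (k+1) ↑w)
        = ∑ w : {w : X // w ∉ S}, P z ↑w - ∑ w : {w : X // w ∉ S}, P z ↑w * W P S (k+1) ↑w := by
      rw [← Finset.sum_sub_distrib]
      exact Finset.sum_congr rfl fun w _ => by ring
    have h3 : 0 ≤ ∑ u ∈ S, P z u * W P S (k+1) u :=
      Finset.sum_nonneg fun u _ => mul_nonneg (hnn _ _) (W_nonneg S hnn _ _)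
    have h4 : ∑ u ∈ S, P z u * W P S (k+1) u ≤ ∑ u ∈ S, P z u :=
      Finset.sum_le_sum fun u _ => by
        have := W_le_one S hnn hrow (k+1) u
        nlinarith [hnn z u]
    linarith

variable {P} in
lemma pow_pos_succ (hnn : ∀ x y, 0 ≤ P x y) (hrow : ∀ x, ∑ y, P x y = 1)
    {m : ℕ} (hm : ∀ x y : X, 0 < ((Matrix.of P) ^ m) x y) (z y : X) :
    0 < ((Matrix.of P) ^ (m+1)) z y := by
  rw [pow_succ', Matrix.mul_apply]
  have hz : ∃ u, 0 < P z u := by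
    by_contra h
    push_neg at h
    have : ∑ u, P z u = 0 := le_antisymm (Finset.sum_nonpos fun u _ => h u)
      (Finset.sum_nonneg fun u _ => hnn z u)
    rw [hrow z] at this; norm_num at this
  obtain ⟨u, hu⟩ := hz
  refine Finset.sum_pos' (fun v _ => mul_nonneg (hnn z v) (pow_nonneg' hnn m v y)) ?_
  · exact ⟨u, mem_univ u, mul_pos hu (hm u y)⟩

variable {P} in
lemma V_le_one (hnn : ∀ x y, 0 ≤ P x y) (hrow : ∀ x, ∑ y, P x y = 1) (k : ℕ) :
    ∀ x : X, V P S k x ≤ 1 := by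
  induction k with
  | zero =>
    intro x
    rw [V_zero]
    have := hsplit S (P x)
    rw [hrow x] at this
    have h0 : 0 ≤ ∑ y ∈ S, P x y := Finset.sum_nonneg fun y _ => hnn x y
    linarith
  | succ k ih =>
    intro x
    rw [V_succ]
    calc ∑ z : {z : X // z ∉ S}, P x ↑z * V P S k ↑z
        ≤ ∑ z : {z : X // z ∉ S}, P x ↑z := Finset.sum_le_sum fun z _ =>
          mul_le_of_le_one_right (hnn _ _) (ih ↑z)
      _ ≤ 1 := by
          have := hsplit S (P x)
          rw [hrow x] at this
          have h0 : 0 ≤ ∑ y ∈ S, P x y := Finset.sum_nonneg fun y _ => hnn x y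
          linarith

variable {P} in
lemma V_comp (hnn : ∀ x y, 0 ≤ P x y) {m : ℕ} {r : ℝ} (hr0 : 0 ≤ r)
    (hVm : ∀ z : {z : X // z ∉ S}, V P S m ↑z ≤ r) :
    ∀ a, ∀ x : X, V P S (a + m + 1) x ≤ V P S a x * r := by
  intro a
  induction a with
  | zero =>
    intro x
    have h : 0 + m + 1 = m + 1 := by omega
    rw [h, V_succ, V_zero, Finset.sum_mul]
    exact Finset.sum_le_sum fun z _ => mul_le_mul_of_nonneg_left (hVm z) (hnn _ _)
  | succ a ih =>
    intro x
    have h : a + 1 + m + 1 = (a + m + 1) + 1 := by omega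
    rw [h, V_succ, V_succ, Finset.sum_mul]
    refine Finset.sum_le_sum fun z _ => ?_
    calc P x ↑z * V P S (a + m + 1) ↑z ≤ P x ↑z * (V P S a ↑z * r) :=
          mul_le_mul_of_nonneg_left (ih ↑z) (hnn _ _)
      _ = P x ↑z * V P S a ↑z * r := by ring

variable {P} in
lemma V_geom (hnn : ∀ x y, 0 ≤ P x y) (hrow : ∀ x, ∑ y, P x y = 1) {m : ℕ} {r : ℝ}
    (hr0 : 0 ≤ r) (hVm : ∀ z : {z : X // z ∉ S}, V P S m ↑z ≤ r) :
    ∀ j c, ∀ x : X, V P S (j * (m + 1) + c) x ≤ r ^ j := by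
  intro j
  induction j with
  | zero =>
    intro c x
    simpa using V_le_one S hnn hrow (0 * (m+1) + c) x
  | succ j ih =>
    intro c x
    have h : (j + 1) * (m + 1) + c = (j * (m + 1) + c) + m + 1 := by ring
    rw [h]
    calc V P S ((j * (m + 1) + c) + m + 1) x ≤ V P S (j * (m + 1) + c) x * r :=
          V_comp S hnn hr0 hVm _ x
      _ ≤ r ^ j * r := mul_le_mul_of_nonneg_right (ih c x) hr0
      _ = r ^ (j + 1) := (pow_succ r j).symm

variable {P} in
lemma V_le_rpow (hnn : ∀ x y, 0 ≤ P x y) (hrow : ∀ x, ∑ y, P x y = 1) {m : ℕ} {r : ℝ}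
    (hr0 : 0 ≤ r) (hVm : ∀ z : {z : X // z ∉ S}, V P S m ↑z ≤ r) (k : ℕ) (x : X) :
    V P S k x ≤ r ^ (k / (m + 1)) := by
  have h := V_geom S hnn hrow hr0 hVm (k / (m + 1)) (k % (m + 1)) x
  have hk : k / (m + 1) * (m + 1) + k % (m + 1) = k := by
    rw [mul_comm]; exact Nat.div_add_mod k (m + 1)
  rwa [hk] at h

lemma summable_aux {r : ℝ} (hr0 : 0 ≤ r) (hr1 : r < 1) (p : ℕ) :
    Summable (fun k : ℕ => r ^ (k / (p + 1))) := by
  have hsum : ∀ n : ℕ, ∑ i ∈ range ((p + 1) * n), r ^ (i / (p + 1))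
      = ∑ j ∈ range n, ((p : ℝ) + 1) * r ^ j := by
    intro n
    induction n with
    | zero => simp
    | succ n ih =>
      have hc : ∀ i ∈ range (p + 1), r ^ (((p + 1) * n + i) / (p + 1)) = r ^ n := by
        intro i hi
        rw [Nat.mul_add_div (Nat.succ_pos p), Nat.div_eq_of_lt (mem_range.mp hi), add_zero]
      rw [Nat.mul_succ, Finset.sum_range_add, ih, Finset.sum_congr rfl hc,
        Finset.sum_const, card_range, nsmul_eq_mul, Finset.sum_range_succ]
      push_cast
      ring
  refine summable_of_sum_range_le (c := ((p : ℝ) + 1) * (1 - r)⁻¹)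
    (fun n => pow_nonneg hr0 _) (fun n => ?_)
  calc ∑ i ∈ range n, r ^ (i / (p + 1))
      ≤ ∑ i ∈ range ((p + 1) * n), r ^ (i / (p + 1)) :=
        Finset.sum_le_sum_of_subset_of_nonneg
          (Finset.range_subset_range.mpr (Nat.le_mul_of_pos_left n (Nat.succ_pos p)))
          (fun _ _ _ => pow_nonneg hr0 _)
    _ = ∑ j ∈ range n, ((p : ℝ) + 1) * r ^ j := hsum n
    _ = ((p : ℝ) + 1) * ∑ j ∈ range n, r ^ j := by rw [Finset.mul_sum]
    _ ≤ ((p : ℝ) + 1) * (1 - r)⁻¹ := by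
        refine mul_le_mul_of_nonneg_left ?_ (by positivity)
        calc ∑ j ∈ range n, r ^ j ≤ ∑' j : ℕ, r ^ j :=
              Summable.sum_le_tsum (range n) (fun i _ => pow_nonneg hr0 i)
                (summable_geometric_of_lt_one hr0 hr1)
          _ = (1 - r)⁻¹ := tsum_geometric_of_lt_one hr0 hr1

end Stmt10Aux

open Stmt10Aux in

/-- Induced Markov chain on a subset is row-stochastic.  Let `P` be the transition matrix
of a finite irreducible Markov chain, `S` a nonempty proper subset of the state space, and
for `x, y ∈ S` let
`P̃(x,y) = P(x,y) + Σ_{k≥0} Σ_{x₁,…,x_{k+1} ∉ S} P(x,x₁)⋯P(x_{k+1},y)`.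
Then each excursion series converges and `Σ_{y ∈ S} P̃(x,y) = 1`. -/
theorem stmt10 {X : Type*} [Fintype X] [DecidableEq X]
    (P : X → X → ℝ)
    (hnn : ∀ x y, 0 ≤ P x y) (hrow : ∀ x, ∑ y, P x y = 1)
    (hirr : ∃ m : ℕ, ∀ x y : X, 0 < ((Matrix.of P) ^ m) x y)
    (S : Finset X) (hS : S.Nonempty) (hS' : S ≠ Finset.univ)
    (x : X) (hx : x ∈ S) :
    (∀ y ∈ S, Summable (fun k : ℕ =>
        ∑ q : Fin (k + 1) → {z : X // z ∉ S},
          P x (q 0) * (∏ i : Fin k, P (q i.castSucc) (q i.succ)) * P (q (Fin.last k)) y)) ∧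
    ∑ y ∈ S, (P x y + ∑' k : ℕ,
        ∑ q : Fin (k + 1) → {z : X // z ∉ S},
          P x (q 0) * (∏ i : Fin k, P (q i.castSucc) (q i.succ)) * P (q (Fin.last k)) y)
      = 1 := by
  classical
  obtain ⟨m, hm⟩ := hirr
  have hTne : ∃ z : X, z ∉ S := by
    by_contra h
    push_neg at h
    exact hS' (Finset.eq_univ_iff_forall.mpr h)
  obtain ⟨z0, hz0⟩ := hTne
  haveI : Nonempty {z : X // z ∉ S} := ⟨⟨z0, hz0⟩⟩
  set r : ℝ := Finset.univ.sup' Finset.univ_nonempty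
    (fun z : {z : X // z ∉ S} => V P S m ↑z) with hrdef
  have hVm : ∀ z : {z : X // z ∉ S}, V P S m ↑z ≤ r :=
    fun z => Finset.le_sup' (fun z : {z : X // z ∉ S} => V P S m ↑z) (Finset.mem_univ z)
  have hr0 : 0 ≤ r :=
    le_trans (V_nonneg S hnn m _) (hVm (Classical.arbitrary _))
  have hr1 : r < 1 := by
    rw [hrdef, Finset.sup'_lt_iff]
    intro z _
    have h1 := V_le_one_sub_W S hnn hrow m (z : X)
    have h2 : 0 < W P S (m + 1) (z : X) := by
      obtain ⟨s, hs⟩ := hS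
      exact Finset.sum_pos' (fun s' _ => pow_nonneg' hnn (m + 1) _ s')
        ⟨s, hs, pow_pos_succ hnn hrow hm _ s⟩
    linarith
  have hg : Summable (fun k : ℕ => r ^ (k / (m + 1))) := summable_aux hr0 hr1 m
  have hVle : ∀ (k : ℕ) (x' : X), V P S k x' ≤ r ^ (k / (m + 1)) :=
    fun k x' => V_le_rpow S hnn hrow hr0 hVm k x'
  have hAle : ∀ (k : ℕ) (y : X), A P S k x y ≤ V P S k x := by
    intro k y
    rw [A, V]
    refine Finset.sum_le_sum fun q _ => ?_
    exact mul_le_of_le_one_right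
      (mul_nonneg (hnn _ _) (Finset.prod_nonneg fun i _ => hnn _ _))
      (P_le_one hnn hrow _ y)
  have hsummA : ∀ y : X, Summable (fun k => A P S k x y) := fun y =>
    Summable.of_nonneg_of_le (fun k => A_nonneg S hnn k x y)
      (fun k => le_trans (hAle k y) (hVle k x)) hg
  have key : ∑ y ∈ S, ∑' k : ℕ, A P S k x y = V P S 0 x := by
    rw [← Summable.tsum_finsetSum (fun y _ => hsummA y)]
    have hsummF : Summable (fun k => ∑ y ∈ S, A P S k x y) :=
      summable_sum fun y _ => hsummA y
    have hpart : ∀ n : ℕ, ∑ k ∈ Finset.range n, ∑ y ∈ S, A P S k x y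
        = V P S 0 x - V P S n x := by
      intro n
      calc ∑ k ∈ Finset.range n, ∑ y ∈ S, A P S k x y
          = ∑ k ∈ Finset.range n, (V P S k x - V P S (k + 1) x) :=
            Finset.sum_congr rfl fun k _ => sum_A S hrow k x
        _ = V P S 0 x - V P S n x := Finset.sum_range_sub' _ n
    have hV0 : Filter.Tendsto (fun n => V P S n x) Filter.atTop (nhds 0) :=
      squeeze_zero (fun n => V_nonneg S hnn n x) (fun n => hVle n x)
        hg.tendsto_atTop_zero
    have hten : Filter.Tendsto (fun n => ∑ k ∈ Finset.range n, ∑ y ∈ S, A P S k x y)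
        Filter.atTop (nhds (V P S 0 x)) := by
      simp only [hpart]
      simpa using Filter.Tendsto.const_sub (V P S 0 x) hV0
    exact ((hsummF.hasSum_iff_tendsto_nat).mpr hten).tsum_eq
  constructor
  · intro y _
    exact hsummA y
  · show ∑ y ∈ S, (P x y + ∑' k : ℕ, A P S k x y) = 1
    rw [Finset.sum_add_distrib, key, V_zero]
    have := hsplit S (P x)
    rw [hrow x] at this
    linarith
end

section
/- For n = 2m, the central binomial coefficient satisfies 2^n/√(π(n/2 + 1/3)) ≤ C(n, n/2) ≤ 2^n/√(π(n/2 + 1/4)). -/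
open Filter Topology

noncomputable def aSeq (m : ℕ) : ℝ := ((2 * m).choose m : ℝ) / 4 ^ m

lemma aSeq_pos (m : ℕ) : 0 < aSeq m := by
  apply div_pos
  · exact_mod_cast Nat.choose_pos (by omega)
  · positivity

lemma aSeq_succ (m : ℕ) :
    aSeq (m + 1) = aSeq m * (2 * m + 1) / (2 * m + 2) := by
  have h := Nat.succ_mul_centralBinom_succ m
  unfold Nat.centralBinom at h
  have h' : ((m + 1 : ℕ) : ℝ) * ((2 * (m + 1)).choose (m + 1) : ℝ)
      = 2 * (2 * m + 1) * ((2 * m).choose m : ℝ) := by exact_mod_cast h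
  unfold aSeq
  push_cast at h' ⊢
  have hm1 : (m : ℝ) + 1 ≠ 0 := by positivity
  field_simp
  linear_combination (2 * (4:ℝ) ^ m) * h'

lemma wallis_eq (m : ℕ) :
    Real.Wallis.W m = 1 / (aSeq m ^ 2 * (2 * m + 1)) := by
  rw [Real.Wallis.W_eq_factorial_ratio]
  unfold aSeq
  have h1 : (((2 * m).factorial : ℝ)) ≠ 0 := by positivity
  have h2 : ((m.factorial : ℝ)) ≠ 0 := by positivity
  have h3 : ((2 * m).choose m : ℝ) ≠ 0 := by
    exact_mod_cast (Nat.choose_pos (by omega : m ≤ 2 * m)).ne'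
  have hc : ((2 * m).choose m : ℝ) = ((2 * m).factorial : ℝ) / (m.factorial * m.factorial) := by
    rw [eq_div_iff (by positivity)]
    have := Nat.choose_mul_factorial_mul_factorial (by omega : m ≤ 2 * m)
    have h2m : 2 * m - m = m := by omega
    rw [h2m] at this
    rw [← mul_assoc]
    exact_mod_cast this
  have h4 : (2 : ℝ) ^ (4 * m) = (4 ^ m) ^ 2 := by
    rw [show (4:ℝ) = 2 ^ 2 by norm_num, ← pow_mul, ← pow_mul]; ring_nf
  rw [hc, h4]
  have h5 : (0 : ℝ) < 2 * m + 1 := by positivity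
  field_simp

lemma tendsto_a_sq : Tendsto (fun m => aSeq m ^ 2 * (2 * m + 1)) atTop (𝓝 (2 / Real.pi)) := by
  have hW := Real.Wallis.tendsto_W_nhds_pi_div_two
  have h := hW.inv₀ (by positivity : (Real.pi / 2) ≠ 0)
  have heq : ∀ m, (Real.Wallis.W m)⁻¹ = aSeq m ^ 2 * (2 * m + 1) := by
    intro m
    rw [wallis_eq]
    rw [one_div, inv_inv]
  have : (Real.pi / 2)⁻¹ = 2 / Real.pi := by
    rw [inv_div]
  rw [this] at h
  exact h.congr heq

lemma tendsto_a_sq_zero : Tendsto (fun m => aSeq m ^ 2) atTop (𝓝 0) := by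
  have h0 : Tendsto (fun m : ℕ => (2 * (m : ℝ) + 1)) atTop atTop := by
    apply Filter.tendsto_atTop_add_const_right
    exact (tendsto_natCast_atTop_atTop).const_mul_atTop two_pos
  have h1 := tendsto_inv_atTop_zero.comp h0
  have := tendsto_a_sq.mul h1
  simp only [mul_zero] at this
  apply this.congr
  intro m
  have hne : (2 * (m : ℝ) + 1) ≠ 0 := by positivity
  simp only [Function.comp]
  field_simp

lemma tendsto_b : Tendsto (fun m => aSeq m ^ 2 * (m + 1 / 4)) atTop (𝓝 (1 / Real.pi)) := by
  have h := (tendsto_a_sq.div_const 2).sub (tendsto_a_sq_zero.mul_const (1/4))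
  have : 2 / Real.pi / 2 - 0 * (1/4) = 1 / Real.pi := by ring
  rw [this] at h
  apply h.congr
  intro m; ring

lemma tendsto_c : Tendsto (fun m => aSeq m ^ 2 * (m + 1 / 3)) atTop (𝓝 (1 / Real.pi)) := by
  have h := (tendsto_a_sq.div_const 2).sub (tendsto_a_sq_zero.mul_const (1/6))
  have : 2 / Real.pi / 2 - 0 * (1/6) = 1 / Real.pi := by ring
  rw [this] at h
  apply h.congr
  intro m; ring

lemma b_mono : Monotone (fun m => aSeq m ^ 2 * (m + 1 / 4)) := by
  apply monotone_nat_of_le_succ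
  intro m
  have h := aSeq_succ m
  have hp := aSeq_pos m
  have h2 : (0 : ℝ) < 2 * m + 2 := by positivity
  rw [h]
  rw [div_pow, div_mul_eq_mul_div, le_div_iff₀ (by positivity)]
  push_cast
  nlinarith [sq_nonneg (aSeq m), mul_pos hp hp]

lemma c_anti : Antitone (fun m => aSeq m ^ 2 * (m + 1 / 3)) := by
  apply antitone_nat_of_succ_le
  intro m
  have h := aSeq_succ m
  have hp := aSeq_pos m
  have h2 : (0 : ℝ) < 2 * m + 2 := by positivity
  rw [h]
  rw [div_pow, div_mul_eq_mul_div, div_le_iff₀ (by positivity)]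
  push_cast
  nlinarith [sq_nonneg (aSeq m), mul_pos hp hp, (Nat.cast_nonneg m : (0:ℝ) ≤ m)]

/-- For even `n = 2m ≥ 2`, the central binomial coefficient satisfies
`2^n/√(π(n/2 + 1/3)) ≤ C(n, n/2) ≤ 2^n/√(π(n/2 + 1/4))`. -/
theorem stmt17 (m : ℕ) (hm : 1 ≤ m) :
    (2 : ℝ) ^ (2 * m) / Real.sqrt (Real.pi * ((2 * m : ℝ) / 2 + 1 / 3))
        ≤ ((2 * m).choose m : ℝ) ∧
    ((2 * m).choose m : ℝ)
        ≤ (2 : ℝ) ^ (2 * m) / Real.sqrt (Real.pi * ((2 * m : ℝ) / 2 + 1 / 4)) := by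
  have hpi := Real.pi_pos
  have hb : aSeq m ^ 2 * (m + 1 / 4) ≤ 1 / Real.pi := b_mono.ge_of_tendsto tendsto_b m
  have hc : 1 / Real.pi ≤ aSeq m ^ 2 * (m + 1 / 3) := c_anti.le_of_tendsto tendsto_c m
  have hp := aSeq_pos m
  have hm2 : ((2 * m : ℝ)) / 2 = (m : ℝ) := by ring
  have h4 : (2 : ℝ) ^ (2 * m) = 4 ^ m := by rw [pow_mul]; norm_num
  have ht4 : (0 : ℝ) < Real.pi * ((m : ℝ) + 1 / 4) := by positivity
  have ht3 : (0 : ℝ) < Real.pi * ((m : ℝ) + 1 / 3) := by positivity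
  have key1 : aSeq m ≤ 1 / Real.sqrt (Real.pi * ((m : ℝ) + 1 / 4)) := by
    have hsq : aSeq m ^ 2 ≤ 1 / (Real.pi * ((m : ℝ) + 1 / 4)) := by
      rw [le_div_iff₀ ht4]
      have h := mul_le_mul_of_nonneg_left hb hpi.le
      rw [mul_one_div, div_self hpi.ne'] at h
      nlinarith [h]
    calc aSeq m = Real.sqrt (aSeq m ^ 2) := by rw [Real.sqrt_sq hp.le]
      _ ≤ Real.sqrt (1 / (Real.pi * ((m : ℝ) + 1 / 4))) := Real.sqrt_le_sqrt hsq
      _ = 1 / Real.sqrt (Real.pi * ((m : ℝ) + 1 / 4)) := by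
          rw [show (1:ℝ)/(Real.pi*((m:ℝ)+1/4)) = (Real.pi*((m:ℝ)+1/4))⁻¹ from one_div _,
            Real.sqrt_inv]
          exact (one_div _).symm
  have key2 : 1 / Real.sqrt (Real.pi * ((m : ℝ) + 1 / 3)) ≤ aSeq m := by
    have hsq : 1 / (Real.pi * ((m : ℝ) + 1 / 3)) ≤ aSeq m ^ 2 := by
      rw [div_le_iff₀ ht3]
      have h := mul_le_mul_of_nonneg_left hc hpi.le
      rw [mul_one_div, div_self hpi.ne'] at h
      nlinarith [h]
    calc 1 / Real.sqrt (Real.pi * ((m : ℝ) + 1 / 3))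
        = Real.sqrt (1 / (Real.pi * ((m : ℝ) + 1 / 3))) := by
          rw [show (1:ℝ)/(Real.pi*((m:ℝ)+1/3)) = (Real.pi*((m:ℝ)+1/3))⁻¹ from one_div _,
            Real.sqrt_inv, one_div]
      _ ≤ Real.sqrt (aSeq m ^ 2) := Real.sqrt_le_sqrt hsq
      _ = aSeq m := Real.sqrt_sq hp.le
  have hs3 : (0:ℝ) < Real.sqrt (Real.pi * ((m : ℝ) + 1 / 3)) := Real.sqrt_pos.mpr ht3
  have hs4 : (0:ℝ) < Real.sqrt (Real.pi * ((m : ℝ) + 1 / 4)) := Real.sqrt_pos.mpr ht4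
  have h4pos : (0:ℝ) < 4 ^ m := by positivity
  constructor
  · rw [hm2, h4]
    unfold aSeq at key2
    calc (4:ℝ) ^ m / Real.sqrt (Real.pi * ((m : ℝ) + 1 / 3))
        = 4 ^ m * (1 / Real.sqrt (Real.pi * ((m : ℝ) + 1 / 3))) := by ring
      _ ≤ 4 ^ m * (((2 * m).choose m : ℝ) / 4 ^ m) :=
          mul_le_mul_of_nonneg_left key2 h4pos.le
      _ = ((2 * m).choose m : ℝ) := by field_simp
  · rw [hm2, h4]
    unfold aSeq at key1
    calc ((2 * m).choose m : ℝ)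
        = 4 ^ m * (((2 * m).choose m : ℝ) / 4 ^ m) := by field_simp
      _ ≤ 4 ^ m * (1 / Real.sqrt (Real.pi * ((m : ℝ) + 1 / 4))) :=
          mul_le_mul_of_nonneg_left key1 h4pos.le
      _ = 4 ^ m / Real.sqrt (Real.pi * ((m : ℝ) + 1 / 4)) := by ring
end
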